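/- Let (U_1,...,U_n) be binary random variables with joint distribution P, let M \subseteq {1,...,n}, and let Q be the perturbed measure replacing conditionals at indices in M by the uniform distribution 1/2. If for every j \in M the conditional entropy satisfies H(U_j | U_1^{j-1}) \geq 1 - 2\delta, then the total variation distance satisfies \sum_{u^n} |P(u^n) - Q(u^n)| \leq \sqrt{(2 \ln 2) \cdot 2\delta |M|}. -/

import Mathlib

open scoped BigOperators

open Real

lemma aux_log_inv (x : ℝ) (hx : 0 < x) : 0 ≤ Real.log x + 1/x - 1 := by
  have h := Real.log_le_sub_one_of_pos (show (0:ℝ) < 1/x by positivity)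
  rw [Real.log_div one_ne_zero (ne_of_gt hx), Real.log_one] at h
  linarith

noncomputable def phiF : ℝ → ℝ := fun x => (x+1) * Real.log x - 2*(x-1)

lemma phiF_deriv (x : ℝ) (hx : 0 < x) :
    HasDerivAt phiF (Real.log x + 1/x - 1) x := by
  have h1 : HasDerivAt (fun x : ℝ => (x+1) * Real.log x)
      (1 * Real.log x + (x+1) * x⁻¹) x := by
    exact (((hasDerivAt_id x).add_const 1)).mul (Real.hasDerivAt_log (ne_of_gt hx))
  have h2 : HasDerivAt (fun x : ℝ => 2*(x-1)) 2 x := by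
    simpa using (((hasDerivAt_id x).sub_const 1).const_mul 2)
  have := h1.fun_sub h2
  refine this.congr_deriv ?_
  rw [add_mul, mul_inv_cancel₀ (ne_of_gt hx)]
  ring

lemma phiF_mono : MonotoneOn phiF (Set.Ioi 0) := by
  have hc : ContinuousOn phiF (Set.Ioi 0) := by
    intro x hx
    exact ((phiF_deriv x hx).continuousAt).continuousWithinAt
  apply monotoneOn_of_deriv_nonneg (convex_Ioi 0) hc
  · intro x hx
    rw [interior_Ioi] at hx
    exact (phiF_deriv x hx).differentiableAt.differentiableWithinAt
  · intro x hx
    rw [interior_Ioi] at hx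
    rw [(phiF_deriv x hx).deriv]
    exact aux_log_inv x hx

lemma phiF_one : phiF 1 = 0 := by simp [phiF]

lemma phiF_nonneg {x : ℝ} (hx : 1 ≤ x) : 0 ≤ phiF x := by
  have := phiF_mono (Set.mem_Ioi.2 one_pos) (Set.mem_Ioi.2 (lt_of_lt_of_le one_pos hx)) hx
  rwa [phiF_one] at this

lemma phiF_nonpos {x : ℝ} (hx0 : 0 < x) (hx : x ≤ 1) : phiF x ≤ 0 := by
  have := phiF_mono (Set.mem_Ioi.2 hx0) (Set.mem_Ioi.2 one_pos) hx
  rwa [phiF_one] at this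

noncomputable def hF : ℝ → ℝ := fun x => (2*x+4)*(x*Real.log x - x + 1) - 3*(x-1)^2

lemma hF_deriv (x : ℝ) (hx : 0 < x) : HasDerivAt hF (4 * phiF x) x := by
  have hlog : HasDerivAt (fun x : ℝ => x * Real.log x) (Real.log x + 1) x := by
    have := (hasDerivAt_id x).mul (Real.hasDerivAt_log (ne_of_gt hx))
    refine this.congr_deriv ?_
    rw [id_eq, mul_inv_cancel₀ (ne_of_gt hx)]
    ring
  have h1 : HasDerivAt (fun x : ℝ => x*Real.log x - x + 1) (Real.log x + 1 - 1) x := by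
    simpa using (hlog.sub (hasDerivAt_id x)).add_const 1
  have h2 : HasDerivAt (fun x : ℝ => 2*x+4) 2 x := by
    simpa using ((hasDerivAt_id x).const_mul 2).add_const 4
  have h3 : HasDerivAt (fun x : ℝ => 3*(x-1)^2) (3*(2*(x-1))) x := by
    have : HasDerivAt (fun x : ℝ => (x-1)^2) (2*(x-1)) x := by
      simpa using ((hasDerivAt_id x).sub_const 1).fun_pow 2
    simpa [mul_comm, mul_assoc] using this.const_mul 3
  have := (h2.fun_mul h1).fun_sub h3
  refine this.congr_deriv ?_
  simp only [phiF]
  ring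

lemma hF_one : hF 1 = 0 := by simp [hF]

lemma hF_nonneg {x : ℝ} (hx : 0 < x) : 0 ≤ hF x := by
  rcases le_or_gt 1 x with h1 | h1
  · have hmono : MonotoneOn hF (Set.Ici 1) := by
      apply monotoneOn_of_deriv_nonneg (convex_Ici 1)
      · intro y hy
        exact ((hF_deriv y (lt_of_lt_of_le one_pos hy)).continuousAt).continuousWithinAt
      · intro y hy
        rw [interior_Ici] at hy
        exact (hF_deriv y (lt_trans one_pos hy)).differentiableAt.differentiableWithinAt
      · intro y hy
        rw [interior_Ici] at hy
        rw [(hF_deriv y (lt_trans one_pos hy)).deriv]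
        have := phiF_nonneg (le_of_lt hy)
        linarith
    have := hmono (Set.mem_Ici.2 le_rfl) (Set.mem_Ici.2 h1) h1
    rwa [hF_one] at this
  · have hanti : AntitoneOn hF (Set.Ioc 0 1) := by
      apply antitoneOn_of_deriv_nonpos (convex_Ioc 0 1)
      · intro y hy
        exact ((hF_deriv y hy.1).continuousAt).continuousWithinAt
      · intro y hy
        rw [interior_Ioc] at hy
        exact (hF_deriv y hy.1).differentiableAt.differentiableWithinAt
      · intro y hy
        rw [interior_Ioc] at hy
        rw [(hF_deriv y hy.1).deriv]
        have := phiF_nonpos hy.1 (le_of_lt hy.2)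
        linarith
    have := hanti (Set.mem_Ioc.2 ⟨hx, le_of_lt h1⟩) (Set.mem_Ioc.2 ⟨one_pos, le_rfl⟩) (le_of_lt h1)
    rwa [hF_one] at this

lemma key_scalar {x : ℝ} (hx : 0 < x) :
    3*(x-1)^2 ≤ (2*x+4)*(x*Real.log x - x + 1) := by
  have := hF_nonneg hx
  simp only [hF] at this
  linarith

lemma kl_pointwise {a b : ℝ} (ha : 0 ≤ a) (hb : 0 ≤ b) (hab : a ≠ 0 → b ≠ 0) :
    (a - b) + 3*(a-b)^2/(2*(a+2*b)) ≤ a * Real.log (a/b) := by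
  rcases eq_or_lt_of_le ha with h0 | hapos
  · -- a = 0
    rcases eq_or_lt_of_le hb with hb0 | hbpos
    · simp [← h0, ← hb0]
    · rw [← h0]
      have h1 : (0 - b) + 3*(0-b)^2/(2*(0+2*b)) = -b/4 := by
        field_simp
        ring
      rw [h1]
      have h2 : (0:ℝ) * Real.log (0/b) = 0 := by simp
      rw [h2]
      linarith
  · have hbpos : 0 < b := lt_of_le_of_ne hb (Ne.symm (hab (ne_of_gt hapos)))
    set x := a / b with hxdef
    have hxpos : 0 < x := div_pos hapos hbpos
    have hax : a = b * x := by rw [hxdef]; field_simp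
    have key := key_scalar hxpos
    have h1 : 3*(x-1)^2/(2*(x+2)) ≤ x*Real.log x - x + 1 := by
      rw [div_le_iff₀ (by positivity)]
      nlinarith [key]
    have h2 : 3*(a-b)^2/(2*(a+2*b)) = b * (3*(x-1)^2/(2*(x+2))) := by
      rw [hax]
      field_simp
    rw [h2, hax]
    nlinarith [mul_le_mul_of_nonneg_left h1 hb]

lemma pinsker_finset {ι : Type*} [Fintype ι] (p q : ι → ℝ)
    (hp : ∀ i, 0 ≤ p i) (hq : ∀ i, 0 ≤ q i) (hpq : ∀ i, p i ≠ 0 → q i ≠ 0)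
    (hp1 : ∑ i, p i = 1) (hq1 : ∑ i, q i ≤ 1) :
    ∑ i, |p i - q i| ≤ Real.sqrt (2 * ∑ i, p i * Real.log (p i / q i)) := by
  classical
  set c := ∑ i, q i with hc
  have hc0 : 0 ≤ c := Finset.sum_nonneg (fun i _ => hq i)
  set r : ι → ℝ := fun i => 3*(p i - q i)^2/(2*(p i + 2*q i)) with hr
  set w : ι → ℝ := fun i => 2*(p i + 2*q i)/3 with hw
  have hrnn : ∀ i, 0 ≤ r i := fun i => by
    apply div_nonneg (by positivity)
    have := hp i; have := hq i; linarith
  have hwnn : ∀ i, 0 ≤ w i := fun i => by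
    have := hp i; have := hq i
    apply div_nonneg <;> linarith
  have hrw : ∀ i, (p i - q i)^2 = r i * w i := by
    intro i
    rcases eq_or_lt_of_le (by have := hp i; have := hq i; linarith :
        (0:ℝ) ≤ p i + 2*q i) with h0 | hpos
    · have hp0 : p i = 0 := by have := hp i; have := hq i; linarith
      have hq0 : q i = 0 := by have := hp i; have := hq i; linarith
      simp [hr, hw, hp0, hq0]
    · simp only [hr, hw]
      field_simp
      rw [mul_div_assoc, div_self (by linarith : (0:ℝ) < p i + q i * 2).ne', mul_one]
  -- Cauchy-Schwarz
  have cs := Finset.sum_mul_sq_le_sq_mul_sq Finset.univ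
      (fun i => Real.sqrt (r i)) (fun i => Real.sqrt (w i))
  have habs : ∀ i, |p i - q i| = Real.sqrt (r i) * Real.sqrt (w i) := by
    intro i
    rw [← Real.sqrt_mul (hrnn i), ← hrw i, Real.sqrt_sq_eq_abs]
  have hsq : ∀ i, Real.sqrt (r i) ^ 2 = r i := fun i => Real.sq_sqrt (hrnn i)
  have hsqw : ∀ i, Real.sqrt (w i) ^ 2 = w i := fun i => Real.sq_sqrt (hwnn i)
  set S := ∑ i, |p i - q i| with hS
  set K := ∑ i, p i * Real.log (p i / q i) with hK
  have hSnn : 0 ≤ S := Finset.sum_nonneg (fun i _ => abs_nonneg _)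
  have hcs2 : S ^ 2 ≤ (∑ i, r i) * (∑ i, w i) := by
    calc S ^ 2 = (∑ i, Real.sqrt (r i) * Real.sqrt (w i)) ^ 2 := by
          rw [hS]; congr 1; exact Finset.sum_congr rfl (fun i _ => habs i)
      _ ≤ (∑ i, Real.sqrt (r i) ^ 2) * (∑ i, Real.sqrt (w i) ^ 2) := cs
      _ = (∑ i, r i) * (∑ i, w i) := by
          simp only [hsq, hsqw]
  have hW : ∑ i, w i = 2*(1 + 2*c)/3 := by
    have h1 : ∑ i, w i = (2*(∑ i, p i) + 4*(∑ i, q i))/3 := by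
      simp only [hw]
      rw [← Finset.sum_div]
      congr 1
      rw [Finset.mul_sum, Finset.mul_sum, ← Finset.sum_add_distrib]
      exact Finset.sum_congr rfl (fun i _ => by ring)
    rw [h1, hp1, ← hc]
    ring
  have hKR : (1 - c) + ∑ i, r i ≤ K := by
    have : ∀ i, (p i - q i) + r i ≤ p i * Real.log (p i / q i) := fun i =>
      kl_pointwise (hp i) (hq i) (hpq i)
    calc (1 - c) + ∑ i, r i = ∑ i, ((p i - q i) + r i) := by
          rw [Finset.sum_add_distrib, Finset.sum_sub_distrib, hp1, hc]
      _ ≤ K := Finset.sum_le_sum (fun i _ => this i)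
  have hRnn : 0 ≤ ∑ i, r i := Finset.sum_nonneg (fun i _ => hrnn i)
  have hK0 : 0 ≤ K := by linarith
  have hfin : S ^ 2 ≤ 2 * K := by
    have h1 : S^2 ≤ (∑ i, r i) * (2*(1+2*c)/3) := by rw [← hW]; exact hcs2
    nlinarith [mul_nonneg (sub_nonneg.2 hq1) (by linarith : (0:ℝ) ≤ 2*K + 1 + 2*c),
      mul_le_mul_of_nonneg_right (by linarith : ∑ i, r i ≤ K - (1 - c))
        (by linarith : (0:ℝ) ≤ 2*(1+2*c)/3)]
  have := Real.sqrt_le_sqrt (le_of_lt (lt_of_le_of_lt hfin (lt_add_one _)))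
  calc S = Real.sqrt (S^2) := (Real.sqrt_sq hSnn).symm
    _ ≤ Real.sqrt (2*K) := Real.sqrt_le_sqrt hfin


lemma prod_sum_le_one {n : ℕ} (f : Fin n → (Fin n → Fin 2) → ℝ)
    (h0 : ∀ j u, 0 ≤ f j u)
    (hdep : ∀ (j : Fin n) (u v : Fin n → Fin 2),
      (∀ i : Fin n, (i:ℕ) ≤ (j:ℕ) → u i = v i) → f j u = f j v)
    (hpair : ∀ (j : Fin n) (u : Fin n → Fin 2),
      f j (Function.update u j 0) + f j (Function.update u j 1) ≤ 1) :
    ∑ u, ∏ j, f j u ≤ 1 := by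
  classical
  have main : ∀ k : ℕ, k ≤ n →
      ∑ u : Fin n → Fin 2, ∏ j ∈ Finset.univ.filter (fun j : Fin n => (j:ℕ) < k), f j u
        ≤ 2 ^ (n - k) := by
    intro k
    induction k with
    | zero =>
      intro _
      have : ∀ u : Fin n → Fin 2,
          ∏ j ∈ Finset.univ.filter (fun j : Fin n => (j:ℕ) < 0), f j u = 1 := by
        intro u
        rw [Finset.prod_eq_one]
        intro j hj
        simp at hj
      rw [Finset.sum_congr rfl (fun u _ => this u)]
      simp [Finset.card_univ]
    | succ k ih =>
      intro hk
      have hkn : k < n := hk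
      have ihk := ih (le_of_lt hkn)
      set κ : Fin n := ⟨k, hkn⟩ with hκ
      set F : (Fin n → Fin 2) → ℝ :=
        fun u => ∏ j ∈ Finset.univ.filter (fun j : Fin n => (j:ℕ) < k), f j u with hF
      have hFnn : ∀ u, 0 ≤ F u := fun u => Finset.prod_nonneg (fun j _ => h0 j u)
      have hFupd : ∀ (u : Fin n → Fin 2) (b : Fin 2), F (Function.update u κ b) = F u := by
        intro u b
        apply Finset.prod_congr rfl
        intro j hj
        simp only [Finset.mem_filter] at hj
        apply hdep
        intro i hi
        apply Function.update_of_ne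
        intro hiκ
        rw [hiκ] at hi
        simp only [hκ] at hi
        omega
      have hsplit : ∀ u : Fin n → Fin 2,
          ∏ j ∈ Finset.univ.filter (fun j : Fin n => (j:ℕ) < k+1), f j u = F u * f κ u := by
        intro u
        have hset : Finset.univ.filter (fun j : Fin n => (j:ℕ) < k+1)
            = insert κ (Finset.univ.filter (fun j : Fin n => (j:ℕ) < k)) := by
          ext j
          simp only [Finset.mem_filter, Finset.mem_insert, Finset.mem_univ, true_and]
          constructor
          · intro hj
            rcases Nat.lt_succ_iff_lt_or_eq.1 hj with h | h
            · exact Or.inr h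
            · exact Or.inl (Fin.ext h)
          · rintro (h | h)
            · rw [h]; exact Nat.lt_succ_self k
            · exact Nat.lt_succ_of_lt h
        rw [hset, Finset.prod_insert (by simp [hκ])]
        ring
      rw [Finset.sum_congr rfl (fun u _ => hsplit u)]
      -- pairing
      set T0 := Finset.univ.filter (fun u : Fin n → Fin 2 => u κ = 0) with hT0
      have hpairsum : ∀ G : (Fin n → Fin 2) → ℝ,
          ∑ u, G u = ∑ u ∈ T0, (G u + G (Function.update u κ 1)) := by
        intro G
        rw [Finset.sum_add_distrib]
        rw [← Finset.sum_filter_add_sum_filter_not Finset.univ (fun u => u κ = 0) G]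
        congr 1
        apply Finset.sum_nbij' (fun u => Function.update u κ 0) (fun u => Function.update u κ 1)
        · intro u hu
          simp only [Finset.mem_filter, Finset.mem_univ, true_and] at hu ⊢
          simp [hT0]
        · intro u hu
          simp only [hT0, Finset.mem_filter, Finset.mem_univ, true_and] at hu ⊢
          simp
        · intro u hu
          simp only [Finset.mem_filter, Finset.mem_univ, true_and] at hu
          funext i
          rcases eq_or_ne i κ with rfl | hi
          · simp [Function.update_self]
            omega
          · simp [Function.update_of_ne hi]
        · intro u hu
          simp only [hT0, Finset.mem_filter, Finset.mem_univ, true_and] at hu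
          funext i
          rcases eq_or_ne i κ with rfl | hi
          · simp [Function.update_self, hu]
          · simp [Function.update_of_ne hi]
        · intro u hu
          simp only [Finset.mem_filter, Finset.mem_univ, true_and] at hu
          congr 1
          funext i
          rcases eq_or_ne i κ with rfl | hi
          · simp [Function.update_self]
            omega
          · simp [Function.update_of_ne hi]
      have hT0F : ∑ u ∈ T0, F u ≤ 2 ^ (n - k) / 2 := by
        have := hpairsum F
        rw [Finset.sum_congr rfl (fun u (hu : u ∈ T0) => by rw [hFupd u 1])] at this
        have h2 : ∑ u ∈ T0, (F u + F u) = 2 * ∑ u ∈ T0, F u := by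
          rw [Finset.sum_add_distrib]; ring
        rw [h2] at this
        linarith [ihk.trans_eq (rfl : (2:ℝ)^(n-k) = 2^(n-k)), this ▸ ihk]
      calc ∑ u, F u * f κ u
          = ∑ u ∈ T0, (F u * f κ u + F (Function.update u κ 1) * f κ (Function.update u κ 1)) :=
            hpairsum _
        _ ≤ ∑ u ∈ T0, F u := by
            apply Finset.sum_le_sum
            intro u hu
            simp only [hT0, Finset.mem_filter, Finset.mem_univ, true_and] at hu
            rw [hFupd u 1]
            have hu0 : Function.update u κ 0 = u := by
              funext i
              rcases eq_or_ne i κ with rfl | hi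
              · simp [Function.update_self, hu]
              · simp [Function.update_of_ne hi]
            have := hpair κ u
            rw [hu0] at this
            nlinarith [hFnn u, h0 κ u, h0 κ (Function.update u κ 1)]
        _ ≤ 2 ^ (n - k) / 2 := hT0F
        _ = 2 ^ (n - (k+1)) := by
            rw [show n - k = (n - (k+1)) + 1 by omega, pow_succ]
            ring
  have := main n le_rfl
  simp only [Nat.sub_self, pow_zero] at this
  convert this using 2 with u
  apply Finset.prod_congr _ (fun _ _ => rfl)
  ext j
  simp [j.isLt]

lemma fin_two_cases (b : Fin 2) : b = 0 ∨ b = 1 := by fin_cases b <;> simp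

lemma telescope_prod (g : ℕ → ℝ) : ∀ n : ℕ, (∀ j ≤ n, g j ≠ 0) →
    ∏ j ∈ Finset.range n, g (j+1) / g j = g n / g 0 := by
  intro n
  induction n with
  | zero => intro h; simp [div_self (h 0 le_rfl)]
  | succ n ih =>
    intro h
    rw [Finset.prod_range_succ, ih (fun j hj => h j (le_trans hj (Nat.le_succ n)))]
    field_simp [h 0 (Nat.zero_le _), h n (Nat.le_succ n)]

/-- Total variation bound: for binary `(U₁,…,Uₙ)` with joint distribution `p` and `Q`
the perturbed measure replacing the conditionals at indices `j ∈ M` by uniform `1/2`,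
if `H(U_j | U₁^{j-1}) ≥ 1 - 2δ` for every `j ∈ M`, then
`∑_{uⁿ} |P(uⁿ) - Q(uⁿ)| ≤ √((2 ln 2) · 2δ|M|)`. -/
theorem tv_le_of_condEntropy_ge (n : ℕ)
    (p : (Fin n → Fin 2) → ℝ) (hp : ∀ u, 0 ≤ p u) (hsum : ∑ u, p u = 1)
    (M : Finset (Fin n)) (δ : ℝ) (hδ : 0 ≤ δ)
    (Pre : ℕ → (Fin n → Fin 2) → ℝ)
    (hPre : ∀ j u, Pre j u =
      ∑ w, if (∀ i : Fin n, (i : ℕ) < j → w i = u i) then p w else 0)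
    (Cond : Fin n → (Fin n → Fin 2) → ℝ)
    (hCond : ∀ j u, Cond j u = Pre ((j : ℕ) + 1) u / Pre (j : ℕ) u)
    (Q : (Fin n → Fin 2) → ℝ)
    (hQ : ∀ u, Q u = ∏ j, if j ∈ M then (1/2 : ℝ) else Cond j u)
    (hH : ∀ j ∈ M, 1 - 2 * δ ≤ -∑ u, p u * Real.logb 2 (Cond j u)) :
    ∑ u, |p u - Q u| ≤ Real.sqrt ((2 * Real.log 2) * (2 * δ * M.card)) := by
  classical
  -- basic facts about Pre
  have hPre0 : ∀ u, Pre 0 u = 1 := by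
    intro u; rw [hPre]; simp [hsum]
  have hPren : ∀ u, Pre n u = p u := by
    intro u; rw [hPre]
    have hiff : ∀ w : Fin n → Fin 2, (∀ i : Fin n, (i:ℕ) < n → w i = u i) ↔ w = u :=
      fun w => ⟨fun h => funext (fun i => h i i.isLt), fun h i _ => by rw [h]⟩
    rw [Finset.sum_congr rfl (fun w _ => if_congr (hiff w) rfl rfl)]
    simp [Finset.sum_ite_eq']
  have hPrenn : ∀ (j : ℕ) u, 0 ≤ Pre j u := by
    intro j u; rw [hPre]
    apply Finset.sum_nonneg
    intro w _
    split
    · exact hp w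
    · exact le_rfl
  have hPre_mono : ∀ (j j' : ℕ) (u : Fin n → Fin 2), j ≤ j' → Pre j' u ≤ Pre j u := by
    intro j j' u h
    rw [hPre, hPre]
    apply Finset.sum_le_sum
    intro w _
    by_cases hw : ∀ i : Fin n, (i:ℕ) < j' → w i = u i
    · rw [if_pos hw, if_pos (fun i hi => hw i (lt_of_lt_of_le hi h))]
    · rw [if_neg hw]
      split
      · exact hp w
      · exact le_rfl
  have hp_le_Pre : ∀ (j : ℕ) (u : Fin n → Fin 2), j ≤ n → p u ≤ Pre j u := by
    intro j u hj
    rw [← hPren u]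
    exact hPre_mono j n u hj
  have hPredep : ∀ (m : ℕ) (u v : Fin n → Fin 2),
      (∀ i : Fin n, (i:ℕ) < m → u i = v i) → Pre m u = Pre m v := by
    intro m u v huv
    rw [hPre, hPre]
    apply Finset.sum_congr rfl
    intro w _
    apply if_congr _ rfl rfl
    constructor
    · intro h i hi; rw [h i hi, huv i hi]
    · intro h i hi; rw [h i hi, ← huv i hi]
  have hCondnn : ∀ (j : Fin n) u, 0 ≤ Cond j u := by
    intro j u; rw [hCond]
    exact div_nonneg (hPrenn _ u) (hPrenn _ u)
  -- chain rule
  have chain : ∀ u, ∏ j : Fin n, Cond j u = p u := by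
    intro u
    by_cases hpu : p u = 0
    · rw [hpu]
      have hex : ∃ m, m < n ∧ Pre m u ≠ 0 ∧ Pre (m+1) u = 0 := by
        by_contra hcon
        push_neg at hcon
        have hall : ∀ m, m ≤ n → Pre m u ≠ 0 := by
          intro m
          induction m with
          | zero => intro _; rw [hPre0]; norm_num
          | succ m ih =>
            intro hm
            exact hcon m (by omega) (ih (by omega))
        exact hall n le_rfl (by rw [hPren]; exact hpu)
      obtain ⟨m, hm, hm0, hm1⟩ := hex
      apply Finset.prod_eq_zero (Finset.mem_univ (⟨m, hm⟩ : Fin n))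
      rw [hCond]
      simp only
      rw [hm1, zero_div]
    · have hpos : ∀ m, m ≤ n → Pre m u ≠ 0 := by
        intro m hm
        exact ne_of_gt (lt_of_lt_of_le (lt_of_le_of_ne (hp u) (Ne.symm hpu)) (hp_le_Pre m u hm))
      have h1 : ∏ j : Fin n, Cond j u = ∏ j ∈ Finset.range n, Pre (j+1) u / Pre j u := by
        rw [← Fin.prod_univ_eq_prod_range (fun m => Pre (m+1) u / Pre m u) n]
        exact Finset.prod_congr rfl (fun j _ => hCond j u)
      rw [h1, telescope_prod (fun m => Pre m u) n hpos, hPren, hPre0, div_one]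
  -- Q facts
  have hQnn : ∀ u, 0 ≤ Q u := by
    intro u; rw [hQ]
    apply Finset.prod_nonneg
    intro j _
    split
    · norm_num
    · exact hCondnn j u
  have hCondpos : ∀ (u : Fin n → Fin 2), p u ≠ 0 → ∀ j : Fin n, 0 < Cond j u := by
    intro u hpu j
    have hppos : 0 < p u := lt_of_le_of_ne (hp u) (Ne.symm hpu)
    rw [hCond]
    apply div_pos
    · exact lt_of_lt_of_le hppos (hp_le_Pre _ u j.isLt)
    · exact lt_of_lt_of_le hppos (hp_le_Pre _ u (le_of_lt j.isLt))
  have hQne : ∀ u, p u ≠ 0 → Q u ≠ 0 := by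
    intro u hpu
    rw [hQ]
    apply ne_of_gt
    apply Finset.prod_pos
    intro j _
    split
    · norm_num
    · exact hCondpos u hpu j
  -- mass of Q is at most 1
  have hQ1 : ∑ u, Q u ≤ 1 := by
    rw [Finset.sum_congr rfl (fun u _ => hQ u)]
    apply prod_sum_le_one
    · intro j u
      split
      · norm_num
      · exact hCondnn j u
    · intro j u v huv
      by_cases hjM : j ∈ M
      · simp [hjM]
      · simp only [if_neg hjM]
        rw [hCond, hCond, hPredep ((j:ℕ)+1) u v (fun i hi => huv i (by omega)),
          hPredep (j:ℕ) u v (fun i hi => huv i (by omega))]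
    · intro j u
      by_cases hjM : j ∈ M
      · norm_num [hjM]
      · simp only [if_neg hjM]
        have hd0 : ∀ b : Fin 2, Pre (j:ℕ) (Function.update u j b) = Pre (j:ℕ) u := by
          intro b
          apply hPredep
          intro i hi
          apply Function.update_of_ne
          intro hij
          rw [hij] at hi
          omega
        have hkey : Pre ((j:ℕ)+1) (Function.update u j 0)
            + Pre ((j:ℕ)+1) (Function.update u j 1) = Pre (j:ℕ) u := by
          rw [hPre, hPre, hPre, ← Finset.sum_add_distrib]
          apply Finset.sum_congr rfl
          intro w _
          have hA : ∀ b : Fin 2, (∀ i : Fin n, (i:ℕ) < (j:ℕ)+1 → w i = Function.update u j b i)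
              ↔ ((∀ i : Fin n, (i:ℕ) < (j:ℕ) → w i = u i) ∧ w j = b) := by
            intro b
            constructor
            · intro h
              constructor
              · intro i hi
                have hij : i ≠ j := by
                  intro e; rw [e] at hi; omega
                have := h i (by omega)
                rwa [Function.update_of_ne hij] at this
              · have := h j (by omega)
                rwa [Function.update_self] at this
            · rintro ⟨h1, h2⟩ i hi
              rcases eq_or_ne i j with rfl | hij
              · rw [Function.update_self]; exact h2
              · rw [Function.update_of_ne hij]
                apply h1
                have : (i:ℕ) ≠ (j:ℕ) := fun e => hij (Fin.ext e)
                omega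
          rw [if_congr (hA 0) rfl rfl, if_congr (hA 1) rfl rfl]
          by_cases hB : ∀ i : Fin n, (i:ℕ) < (j:ℕ) → w i = u i
          · rcases fin_two_cases (w j) with h | h <;> simp [hB, h]
          · have h0 : ∀ b : Fin 2,
                ¬((∀ i : Fin n, (i:ℕ) < (j:ℕ) → w i = u i) ∧ w j = b) :=
              fun b hc => hB hc.1
            rw [if_neg (h0 0), if_neg (h0 1), if_neg hB]
            ring
        rw [hCond, hCond, hd0 0, hd0 1, ← add_div, hkey]
        exact div_self_le_one _
  -- the KL divergence identity and bound
  set KLb := ∑ u, p u * Real.logb 2 (p u / Q u) with hKLb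
  have hKLid : KLb = ∑ j ∈ M, (1 + ∑ u, p u * Real.logb 2 (Cond j u)) := by
    have hstep : ∀ u, p u * Real.logb 2 (p u / Q u)
        = ∑ j ∈ M, p u * (1 + Real.logb 2 (Cond j u)) := by
      intro u
      by_cases hpu : p u = 0
      · simp [hpu]
      · have hratio : p u / Q u = ∏ j ∈ M, (2 * Cond j u) := by
          rw [hQ, ← chain u, ← Finset.prod_div_distrib]
          have : ∀ j : Fin n, Cond j u / (if j ∈ M then (1/2:ℝ) else Cond j u)
              = (if j ∈ M then 2 * Cond j u else 1) := by
            intro j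
            split
            · ring
            · exact div_self (ne_of_gt (hCondpos u hpu j))
          rw [Finset.prod_congr rfl (fun j _ => this j), Finset.prod_ite_mem,
            Finset.univ_inter]
        rw [hratio, Real.logb_prod M _ (fun j _ => by
          have := hCondpos u hpu j; positivity), Finset.mul_sum]
        apply Finset.sum_congr rfl
        intro j hj
        rw [Real.logb_mul two_ne_zero (ne_of_gt (hCondpos u hpu j)),
          Real.logb_self_eq_one one_lt_two]
    rw [hKLb, Finset.sum_congr rfl (fun u _ => hstep u), Finset.sum_comm]
    apply Finset.sum_congr rfl
    intro j _
    rw [Finset.sum_congr rfl (fun u (_ : u ∈ Finset.univ) => mul_add (p u) 1 _),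
      Finset.sum_add_distrib]
    simp [hsum]
  have hKLbound : KLb ≤ 2 * δ * M.card := by
    rw [hKLid]
    calc ∑ j ∈ M, (1 + ∑ u, p u * Real.logb 2 (Cond j u)) ≤ ∑ j ∈ M, 2 * δ := by
          apply Finset.sum_le_sum
          intro j hj
          have := hH j hj
          linarith
      _ = 2 * δ * M.card := by
          rw [Finset.sum_const, nsmul_eq_mul]
          ring
  -- Pinsker
  have hpinsker := pinsker_finset p Q hp hQnn hQne hsum hQ1
  have hKnat : ∑ u, p u * Real.log (p u / Q u) = Real.log 2 * KLb := by
    rw [hKLb, Finset.mul_sum]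
    apply Finset.sum_congr rfl
    intro u _
    have h2 : Real.log 2 ≠ 0 := Real.log_ne_zero_of_pos_of_ne_one two_pos (by norm_num)
    rw [Real.logb]
    field_simp
  rw [hKnat] at hpinsker
  apply le_trans hpinsker
  apply Real.sqrt_le_sqrt
  have hlog2 : 0 < Real.log 2 := Real.log_pos one_lt_two
  nlinarith [hKLbound]
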